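/- Let X, Y, U be compact metric spaces, μ_{xy} a probability measure on X × Y with second marginal μ_y, and (π_n) a sequence of L-Lipschitz kernels π_n: Y → P(U) (Lipschitz with respect to W_1 on P(U)) with U finite and Y a compact subset of a Hilbert space. If the joint measures h_n = μ_{xy} ⊗ π_n converge weakly to some h ∈ P(X × Y × U), then there exists an L-Lipschitz kernel π: Y → P(U) such that h = μ_{xy} ⊗ π. -/

import Mathlib

set_option maxHeartbeats 2000000
set_option synthInstance.maxHeartbeats 1000000

open MeasureTheory Filter
open scoped NNReal ENNReal

/-- The 1-Wasserstein distance via Kantorovich–Rubinstein duality. -/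
noncomputable def W1 {α : Type*} [MetricSpace α] [MeasurableSpace α]
    (μ ν : Measure α) : ℝ :=
  ⨆ f : {f : α → ℝ // LipschitzWith 1 f}, (∫ x, f.1 x ∂μ - ∫ x, f.1 x ∂ν)

/-- The joint measure `μ ⊗ π` of a measure and a kernel. -/
noncomputable def jointMeasure {A U : Type*} [MeasurableSpace A] [MeasurableSpace U]
    (μ : Measure A) (π : A → Measure U) : Measure (A × U) :=
  μ.bind fun a => (Measure.dirac a).prod (π a)

section Aux

variable {U : Type*} [Fintype U] [MeasurableSpace U] [MeasurableSingletonClass U]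

lemma stmt9_measure_eq_sum_indicator (ν : Measure U) (t : Set U) :
    ν t = ∑ u : U, t.indicator (fun v => ν {v}) u := by
  classical
  have h1 : t = ⋃ u ∈ t.toFinset, ({u} : Set U) := by
    ext x; simp
  rw [h1, measure_biUnion_finset ?_ (fun u _ => measurableSet_singleton u)]
  · rw [Finset.sum_indicator_eq_sum_filter]
    congr 1
    ext u; simp
  · intro u hu v hv huv
    simp [Function.onFun, Set.disjoint_singleton, huv]

variable {A : Type*} [MeasurableSpace A]

lemma stmt9_prod_apply_eq (κ : A → Measure U) (hκ : ∀ a, IsProbabilityMeasure (κ a))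
    (r : A → U → ℝ≥0) (hr : ∀ a u, κ a {u} = (r a u : ℝ≥0∞))
    {s : Set (A × U)} (hs : MeasurableSet s) (a : A) :
    ((Measure.dirac a).prod (κ a)) s
      = ∑ u : U, Set.indicator ((fun b => (b, u)) ⁻¹' s) (fun b => (r b u : ℝ≥0∞)) a := by
  haveI := hκ a
  rw [Measure.dirac_prod, Measure.map_apply measurable_prodMk_left hs,
    stmt9_measure_eq_sum_indicator]
  refine Finset.sum_congr rfl fun u _ => ?_
  by_cases h : (a, u) ∈ s
  · simp [Set.indicator_apply, h, hr]
  · simp [Set.indicator_apply, h]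

lemma stmt9_kernel_measurable (κ : A → Measure U) (hκ : ∀ a, IsProbabilityMeasure (κ a))
    (r : A → U → ℝ≥0) (hr : ∀ a u, κ a {u} = (r a u : ℝ≥0∞))
    (hmeas : ∀ u, Measurable fun a => r a u) :
    Measurable (fun a => (Measure.dirac a).prod (κ a)) := by
  apply Measure.measurable_of_measurable_coe
  intro s hs
  simp_rw [stmt9_prod_apply_eq κ hκ r hr hs]
  exact Finset.measurable_sum _ fun u _ =>
    ((hmeas u).coe_nnreal_ennreal).indicator (measurable_prodMk_right hs)

lemma stmt9_joint_eq_sum (μ : Measure A) (κ : A → Measure U)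
    (hκ : ∀ a, IsProbabilityMeasure (κ a))
    (r : A → U → ℝ≥0) (hr : ∀ a u, κ a {u} = (r a u : ℝ≥0∞))
    (hmeas : ∀ u, Measurable fun a => r a u) :
    jointMeasure μ κ
      = ∑ u : U, Measure.map (fun a => (a, u)) (μ.withDensity (fun a => (r a u : ℝ≥0∞))) := by
  ext s hs
  rw [jointMeasure, Measure.bind_apply hs (stmt9_kernel_measurable κ hκ r hr hmeas).aemeasurable]
  simp_rw [stmt9_prod_apply_eq κ hκ r hr hs]
  rw [lintegral_finset_sum _ (fun u _ =>
    ((hmeas u).coe_nnreal_ennreal).indicator (measurable_prodMk_right hs))]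
  rw [Measure.finset_sum_apply]
  refine Finset.sum_congr rfl fun u _ => ?_
  rw [Measure.map_apply (measurable_prodMk_right) hs,
    withDensity_apply _ (measurable_prodMk_right hs),
    lintegral_indicator (measurable_prodMk_right hs)]

lemma stmt9_sum_r_eq_one (κ : A → Measure U) (hκ : ∀ a, IsProbabilityMeasure (κ a))
    (r : A → U → ℝ≥0) (hr : ∀ a u, κ a {u} = (r a u : ℝ≥0∞)) (a : A) :
    ∑ u : U, (r a u : ℝ≥0∞) = 1 := by
  haveI := hκ a
  have h1 := stmt9_measure_eq_sum_indicator (κ a) Set.univ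
  simp only [measure_univ, Set.indicator_univ] at h1
  simp_rw [← hr]
  exact h1.symm

lemma stmt9_joint_prob (μ : Measure A) [IsProbabilityMeasure μ] (κ : A → Measure U)
    (hκ : ∀ a, IsProbabilityMeasure (κ a))
    (r : A → U → ℝ≥0) (hr : ∀ a u, κ a {u} = (r a u : ℝ≥0∞))
    (hmeas : ∀ u, Measurable fun a => r a u) :
    IsProbabilityMeasure (jointMeasure μ κ) := by
  constructor
  rw [stmt9_joint_eq_sum μ κ hκ r hr hmeas, Measure.finset_sum_apply]
  have : ∀ u : U, (Measure.map (fun a => (a, u)) (μ.withDensity (fun a => (r a u : ℝ≥0∞)))) Set.univ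
      = ∫⁻ a, (r a u : ℝ≥0∞) ∂μ := by
    intro u
    rw [Measure.map_apply measurable_prodMk_right MeasurableSet.univ, Set.preimage_univ,
      withDensity_apply _ MeasurableSet.univ, Measure.restrict_univ]
  simp_rw [this]
  rw [← lintegral_finset_sum _ (fun u _ => (hmeas u).coe_nnreal_ennreal)]
  simp_rw [stmt9_sum_r_eq_one κ hκ r hr]
  simp

lemma stmt9_isFiniteMeasure_wd (μ : Measure A) [IsProbabilityMeasure μ] (κ : A → Measure U)
    (hκ : ∀ a, IsProbabilityMeasure (κ a))
    (r : A → U → ℝ≥0) (hr : ∀ a u, κ a {u} = (r a u : ℝ≥0∞)) (u : U) :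
    IsFiniteMeasure (μ.withDensity (fun a => (r a u : ℝ≥0∞))) := by
  constructor
  rw [withDensity_apply _ MeasurableSet.univ, Measure.restrict_univ]
  calc ∫⁻ a, (r a u : ℝ≥0∞) ∂μ ≤ ∫⁻ _, 1 ∂μ := by
        refine lintegral_mono fun a => ?_
        rw [← hr a u]
        haveI := hκ a
        exact prob_le_one
    _ < ⊤ := by simp

lemma stmt9_r_le_one (κ : A → Measure U) (hκ : ∀ a, IsProbabilityMeasure (κ a))
    (r : A → U → ℝ≥0) (hr : ∀ a u, κ a {u} = (r a u : ℝ≥0∞)) (a : A) (u : U) :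
    ((r a u : ℝ)) ≤ 1 := by
  haveI := hκ a
  have : (r a u : ℝ≥0∞) ≤ 1 := by rw [← hr a u]; exact prob_le_one
  exact_mod_cast this

lemma stmt9_integral_joint [TopologicalSpace A] [OpensMeasurableSpace A]
    [SecondCountableTopology A] [TopologicalSpace U] [OpensMeasurableSpace U]
    (μ : Measure A) [IsProbabilityMeasure μ] (κ : A → Measure U)
    (hκ : ∀ a, IsProbabilityMeasure (κ a))
    (r : A → U → ℝ≥0) (hr : ∀ a u, κ a {u} = (r a u : ℝ≥0∞))
    (hmeas : ∀ u, Measurable fun a => r a u)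
    (g : A × U → ℝ) (hg : Continuous g) (C : ℝ) (hgb : ∀ z, ‖g z‖ ≤ C) :
    ∫ z, g z ∂(jointMeasure μ κ) = ∫ a, (∑ u : U, (r a u : ℝ) * g (a, u)) ∂μ := by
  haveI : ∀ u : U, IsFiniteMeasure (μ.withDensity (fun a => (r a u : ℝ≥0∞))) :=
    stmt9_isFiniteMeasure_wd μ κ hκ r hr
  rw [stmt9_joint_eq_sum μ κ hκ r hr hmeas]
  rw [integral_finset_sum_measure (fun u _ => ?_)]
  · have h1 : ∀ u : U, ∫ z, g z ∂(Measure.map (fun a => (a, u))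
        (μ.withDensity (fun a => (r a u : ℝ≥0∞))))
        = ∫ a, (r a u : ℝ) * g (a, u) ∂μ := by
      intro u
      rw [integral_map measurable_prodMk_right.aemeasurable hg.aestronglyMeasurable]
      rw [integral_withDensity_eq_integral_smul (hmeas u) (fun a => g (a, u))]
      simp_rw [NNReal.smul_def, smul_eq_mul]
    simp_rw [h1]
    rw [← integral_finset_sum _ (fun u _ => ?_)]
    · have hsm : StronglyMeasurable fun a => (r a u : ℝ) * g (a, u) :=
        ((hmeas u).coe_nnreal_real.mul
          (hg.comp (continuous_id.prodMk continuous_const)).measurable).stronglyMeasurable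
      refine Integrable.mono' (integrable_const C) hsm.aestronglyMeasurable ?_
      refine Filter.Eventually.of_forall fun a => ?_
      have h2 : ‖(r a u : ℝ) * g (a, u)‖ ≤ ‖g (a, u)‖ := by
        rw [norm_mul, Real.norm_eq_abs, abs_of_nonneg (NNReal.coe_nonneg (r a u))]
        have := stmt9_r_le_one κ hκ r hr a u
        nlinarith [norm_nonneg (g (a, u))]
      exact h2.trans (hgb (a, u))
  · refine ⟨hg.aestronglyMeasurable, ?_⟩
    exact HasFiniteIntegral.of_bounded (C := C) (Filter.Eventually.of_forall hgb)

end Aux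

section W1Aux

variable {U : Type*} [Fintype U] [MetricSpace U] [MeasurableSpace U] [BorelSpace U]

lemma stmt9_toReal_singleton_mem (ν : Measure U) [IsProbabilityMeasure ν] (u : U) :
    (ν {u}).toReal ∈ Set.Icc (0:ℝ) 1 := by
  refine ⟨ENNReal.toReal_nonneg, ?_⟩
  have h := prob_le_one (μ := ν) (s := {u})
  simpa using ENNReal.toReal_mono (by simp) h

lemma stmt9_sum_toReal_singleton (ν : Measure U) [IsProbabilityMeasure ν] :
    ∑ u : U, (ν {u}).toReal = 1 := by
  have h := stmt9_measure_eq_sum_indicator ν Set.univ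
  simp only [measure_univ, Set.indicator_univ] at h
  have h2 : ((1:ℝ≥0∞)).toReal = (∑ u : U, ν {u}).toReal := by rw [← h]
  rw [ENNReal.toReal_sum (fun u _ => measure_ne_top ν {u})] at h2
  simpa using h2.symm

lemma stmt9_integral_eq_sum (ν : Measure U) [IsProbabilityMeasure ν] (f : U → ℝ) :
    ∫ x, f x ∂ν = ∑ u : U, (ν {u}).toReal * f u := by
  rw [integral_fintype]
  simp only [Measure.real, smul_eq_mul]
  exact Integrable.of_finite

variable [Nonempty U]

lemma stmt9_key_bound (ν ν' : Measure U) [IsProbabilityMeasure ν] [IsProbabilityMeasure ν']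
    {f : U → ℝ} (hf : LipschitzWith 1 f) :
    ∫ x, f x ∂ν - ∫ x, f x ∂ν' ≤ ∑ u : U, dist u (Classical.arbitrary U) := by
  set u0 := Classical.arbitrary U
  set a : U → ℝ := fun u => (ν {u}).toReal
  set b : U → ℝ := fun u => (ν' {u}).toReal
  have hdiff : ∫ x, f x ∂ν - ∫ x, f x ∂ν' = ∑ u : U, (a u - b u) * (f u - f u0) := by
    rw [stmt9_integral_eq_sum ν f, stmt9_integral_eq_sum ν' f]
    have hsum : ∑ u : U, (a u - b u) = 0 := by
      rw [Finset.sum_sub_distrib, stmt9_sum_toReal_singleton ν, stmt9_sum_toReal_singleton ν']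
      ring
    have expand : ∑ u : U, (a u - b u) * (f u - f u0)
        = (∑ u : U, (a u - b u) * f u) - (∑ u : U, (a u - b u)) * f u0 := by
      rw [Finset.sum_mul, ← Finset.sum_sub_distrib]
      congr 1; ext u; ring
    rw [expand, hsum]
    simp only [zero_mul, sub_zero, sub_mul, Finset.sum_sub_distrib, a, b]
  rw [hdiff]
  refine (Finset.sum_le_sum fun u _ => ?_)
  have h1 : |a u - b u| ≤ 1 := by
    have ha := stmt9_toReal_singleton_mem ν u
    have hb := stmt9_toReal_singleton_mem ν' u
    rw [abs_le]; constructor <;> [linarith [ha.1, hb.2]; linarith [ha.2, hb.1]]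
  have h2 : |f u - f u0| ≤ dist u u0 := by
    have := hf.dist_le_mul u u0
    rw [Real.dist_eq] at this
    simpa using this
  calc (a u - b u) * (f u - f u0) ≤ |(a u - b u) * (f u - f u0)| := le_abs_self _
    _ = |a u - b u| * |f u - f u0| := abs_mul _ _
    _ ≤ 1 * dist u u0 := by
        apply mul_le_mul h1 h2 (abs_nonneg _) zero_le_one
    _ = dist u u0 := one_mul _

lemma stmt9_W1_bddAbove (ν ν' : Measure U) [IsProbabilityMeasure ν] [IsProbabilityMeasure ν'] :
    BddAbove (Set.range fun f : {f : U → ℝ // LipschitzWith 1 f} =>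
      (∫ x, f.1 x ∂ν - ∫ x, f.1 x ∂ν')) := by
  refine ⟨∑ u : U, dist u (Classical.arbitrary U), ?_⟩
  rintro x ⟨f, rfl⟩
  exact stmt9_key_bound ν ν' f.2

lemma stmt9_le_W1 (ν ν' : Measure U) [IsProbabilityMeasure ν] [IsProbabilityMeasure ν']
    {f : U → ℝ} (hf : LipschitzWith 1 f) :
    ∫ x, f x ∂ν - ∫ x, f x ∂ν' ≤ W1 ν ν' :=
  le_ciSup (stmt9_W1_bddAbove ν ν') ⟨f, hf⟩

end W1Aux

lemma stmt9_W1_le {U : Type*} [MetricSpace U] [MeasurableSpace U]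
    (ν ν' : Measure U) {c : ℝ} (hc : 0 ≤ c)
    (hle : ∀ f : U → ℝ, LipschitzWith 1 f → ∫ x, f x ∂ν - ∫ x, f x ∂ν' ≤ c) :
    W1 ν ν' ≤ c :=
  Real.iSup_le (fun f => hle f.1 f.2) hc

lemma stmt9_exists_d0 {U : Type*} [Fintype U] [MetricSpace U] (hU : ∃ u v : U, u ≠ v) :
    ∃ d0 : ℝ, 0 < d0 ∧ ∀ u v : U, u ≠ v → d0 ≤ dist u v := by
  classical
  obtain ⟨u, v, huv⟩ := hU
  have hne : (Finset.univ.offDiag (α := U)).Nonempty :=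
    ⟨(u, v), Finset.mem_offDiag.mpr ⟨Finset.mem_univ _, Finset.mem_univ _, huv⟩⟩
  obtain ⟨p, hp, hmin⟩ := Finset.exists_min_image _ (fun p => dist p.1 p.2) hne
  refine ⟨dist p.1 p.2, dist_pos.mpr (Finset.mem_offDiag.mp hp).2.2, fun x y hxy => ?_⟩
  exact hmin (x, y) (Finset.mem_offDiag.mpr ⟨Finset.mem_univ _, Finset.mem_univ _, hxy⟩)

lemma stmt9_ite_lipschitz {U : Type*} [MetricSpace U] [DecidableEq U] {d0 : ℝ} (hd0 : 0 < d0)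
    (hd : ∀ u v : U, u ≠ v → d0 ≤ dist u v) (u : U) :
    LipschitzWith 1 (fun x : U => if x = u then d0 else 0) := by
  apply LipschitzWith.of_dist_le_mul
  intro x y
  rw [NNReal.coe_one, one_mul]
  rcases eq_or_ne x y with rfl | hxy
  · simp
  · have hle := hd x y hxy
    rw [Real.dist_eq]
    by_cases hx : x = u <;> by_cases hy : y = u
    · exact absurd (hx.trans hy.symm) hxy
    · rw [if_pos hx, if_neg hy, sub_zero, abs_of_pos hd0]; exact hle
    · rw [if_neg hx, if_pos hy, zero_sub, abs_neg, abs_of_pos hd0]; exact hle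
    · rw [if_neg hx, if_neg hy, sub_zero, abs_zero]; exact dist_nonneg

lemma stmt9_exists_subseq {S : Type*} [MetricSpace S] [CompactSpace S]
    {U : Type*} [Fintype U]
    (q : ℕ → S → U → ℝ) (K : ℝ) (hK : 0 ≤ K)
    (hq01 : ∀ n y u, q n y u ∈ Set.Icc (0:ℝ) 1)
    (hlip : ∀ n y y' u, |q n y u - q n y' u| ≤ K * dist y y') :
    ∃ (p : S → U → ℝ) (φ : ℕ → ℕ), StrictMono φ ∧
      (∀ y u, Tendsto (fun k => q (φ k) y u) atTop (nhds (p y u))) := by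
  have hcont : ∀ n, Continuous (fun y : S => (fun u => q n y u : U → ℝ)) := by
    intro n
    refine continuous_pi fun u => ?_
    have : LipschitzWith (Real.toNNReal K) (fun y : S => q n y u) := by
      apply LipschitzWith.of_dist_le_mul
      intro x y
      rw [Real.dist_eq, Real.coe_toNNReal _ hK]
      exact hlip n x y u
    exact this.continuous
  set F : ℕ → BoundedContinuousFunction S (U → ℝ) :=
    fun n => BoundedContinuousFunction.mkOfCompact ⟨_, hcont n⟩ with hF
  set A : Set (BoundedContinuousFunction S (U → ℝ)) := Set.range F with hA
  have hs : IsCompact (Set.pi Set.univ (fun _ : U => Set.Icc (0:ℝ) 1)) :=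
    isCompact_univ_pi (fun _ => isCompact_Icc)
  have in_s : ∀ (f : BoundedContinuousFunction S (U → ℝ)) (x : S), f ∈ A →
      f x ∈ Set.pi Set.univ (fun _ : U => Set.Icc (0:ℝ) 1) := by
    rintro f x ⟨n, rfl⟩ u _
    exact hq01 n x u
  have equi : Equicontinuous ((↑) : A → S → (U → ℝ)) := by
    apply Metric.equicontinuous_of_continuity_modulus (fun t => K * t)
    · have : Tendsto (fun t : ℝ => K * t) (nhds 0) (nhds (K * 0)) :=
        (continuous_const.mul continuous_id).tendsto 0
      simpa using this
    · rintro x y ⟨f, n, rfl⟩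
      rw [dist_pi_le_iff (by positivity)]
      intro u
      rw [Real.dist_eq]
      exact hlip n x y u
  have hcomp : IsCompact (closure A) :=
    BoundedContinuousFunction.arzela_ascoli _ hs A in_s equi
  obtain ⟨g, -, φ, hφ, htend⟩ :=
    hcomp.isSeqCompact (x := F) (fun n => subset_closure ⟨n, rfl⟩)
  refine ⟨fun y u => g y u, φ, hφ, fun y u => ?_⟩
  have h2 : Continuous fun f : BoundedContinuousFunction S (U → ℝ) => f y u :=
    (continuous_apply u).comp (continuous_eval_const y)
  exact (h2.tendsto g).comp htend

theorem stmt_9 {X H : Type*}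
    [MetricSpace X] [CompactSpace X] [MeasurableSpace X] [BorelSpace X]
    [NormedAddCommGroup H] [InnerProductSpace ℝ H] [MeasurableSpace H] [BorelSpace H]
    (S : Set H) (hS : IsCompact S)
    {U : Type*} [Fintype U] [MetricSpace U] [MeasurableSpace U] [BorelSpace U]
    (μxy : Measure (X × S)) [IsProbabilityMeasure μxy]
    (L : ℝ) (hL : 0 ≤ L)
    (πn : ℕ → S → Measure U)
    (hπnp : ∀ n (y : S), IsProbabilityMeasure (πn n y))
    (hπnLip : ∀ n (y y' : S), W1 (πn n y) (πn n y') ≤ L * dist y y')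
    (h : Measure ((X × S) × U)) [IsProbabilityMeasure h]
    (hconv : ∀ f : BoundedContinuousFunction ((X × S) × U) ℝ,
      Tendsto (fun n => ∫ z, f z ∂(jointMeasure μxy (fun p => πn n p.2)))
        atTop (nhds (∫ z, f z ∂h))) :
    ∃ π : S → Measure U,
      (∀ y : S, IsProbabilityMeasure (π y)) ∧
      (∀ y y' : S, W1 (π y) (π y') ≤ L * dist y y') ∧
      h = jointMeasure μxy (fun p => π p.2) := by
  classical
  haveI : CompactSpace S := isCompact_iff_compactSpace.mp hS
  -- Nonemptiness
  have hXS : Nonempty (X × S) := by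
    by_contra hne
    rw [not_nonempty_iff] at hne
    have h0 := measure_univ (μ := μxy)
    rw [Set.univ_eq_empty_iff.mpr hne, measure_empty] at h0
    exact zero_ne_one h0
  have hSne : Nonempty S := ⟨hXS.some.2⟩
  haveI : Nonempty U := by
    by_contra hne
    rw [not_nonempty_iff] at hne
    haveI := hπnp 0 hSne.some
    have h0 := measure_univ (μ := πn 0 hSne.some)
    rw [Set.univ_eq_empty_iff.mpr hne, measure_empty] at h0
    exact zero_ne_one h0
  -- weights
  set q : ℕ → S → U → ℝ := fun n y u => ((πn n y) {u}).toReal with hqdef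
  have hq01 : ∀ n y u, q n y u ∈ Set.Icc (0:ℝ) 1 := fun n y u => by
    haveI := hπnp n y
    exact stmt9_toReal_singleton_mem (πn n y) u
  have hqsum : ∀ n y, ∑ u : U, q n y u = 1 := fun n y => by
    haveI := hπnp n y
    exact stmt9_sum_toReal_singleton (πn n y)
  -- equi-Lipschitz bound on the coordinates
  obtain ⟨K, hK0, hKlip⟩ : ∃ K : ℝ, 0 ≤ K ∧
      ∀ n (y y' : S) u, |q n y u - q n y' u| ≤ K * dist y y' := by
    by_cases hsub : ∀ u v : U, u = v
    · refine ⟨0, le_refl 0, fun n y y' u => ?_⟩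
      have huniv : ({u} : Set U) = Set.univ := by
        ext v; simp [hsub v u]
      haveI := hπnp n y
      haveI := hπnp n y'
      have e1 : q n y u = 1 := by simp [hqdef, huniv]
      have e2 : q n y' u = 1 := by simp [hqdef, huniv]
      simp [e1, e2]
    · push_neg at hsub
      obtain ⟨d0, hd0, hd⟩ := stmt9_exists_d0 hsub
      refine ⟨L / d0, div_nonneg hL hd0.le, fun n y y' u => ?_⟩
      haveI := hπnp n y
      haveI := hπnp n y'
      have hlipf := stmt9_ite_lipschitz hd0 hd u
      have hint : ∀ (y₀ : S), ∫ x, (if x = u then d0 else 0) ∂(πn n y₀)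
          = q n y₀ u * d0 := by
        intro y₀
        haveI := hπnp n y₀
        rw [stmt9_integral_eq_sum]
        rw [Finset.sum_congr rfl (fun v _ => mul_ite (v = u) ((πn n y₀ {v}).toReal) d0 0)]
        simp only [mul_zero]
        rw [Finset.sum_ite_eq' Finset.univ u (fun v => ((πn n y₀) {v}).toReal * d0)]
        simp [hqdef]
      have hup : q n y u * d0 - q n y' u * d0 ≤ L * dist y y' := by
        have := (stmt9_le_W1 (πn n y) (πn n y') hlipf).trans (hπnLip n y y')
        rwa [hint y, hint y'] at this
      have hdn : q n y' u * d0 - q n y u * d0 ≤ L * dist y y' := by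
        have := (stmt9_le_W1 (πn n y') (πn n y) hlipf).trans (hπnLip n y' y)
        rw [hint y', hint y] at this
        rwa [dist_comm] at this
      have hmul : L / d0 * dist y y' * d0 = L * dist y y' := by
        field_simp
      rw [abs_le]
      constructor
      · nlinarith
      · nlinarith
  -- extract a uniformly convergent subsequence
  obtain ⟨p, φ, hφ, htend⟩ := stmt9_exists_subseq q K hK0 hq01 hKlip
  -- properties of the limit
  have hp01 : ∀ y u, p y u ∈ Set.Icc (0:ℝ) 1 := fun y u =>
    isClosed_Icc.mem_of_tendsto (htend y u)
      (Filter.Eventually.of_forall fun k => hq01 (φ k) y u)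
  have hpsum : ∀ y, ∑ u : U, p y u = 1 := by
    intro y
    refine tendsto_nhds_unique (tendsto_finset_sum _ fun u _ => htend y u) ?_
    have he : (fun k => ∑ u : U, q (φ k) y u) = fun _ => (1:ℝ) :=
      funext fun k => hqsum (φ k) y
    rw [he]
    exact tendsto_const_nhds
  have hplip : ∀ (y y' : S) u, |p y u - p y' u| ≤ K * dist y y' := by
    intro y y' u
    refine le_of_tendsto (((htend y u).sub (htend y' u)).abs) ?_
    exact Filter.Eventually.of_forall fun k => hKlip (φ k) y y' u
  have hpcont : ∀ u, Continuous fun y : S => p y u := by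
    intro u
    have : LipschitzWith (Real.toNNReal K) (fun y : S => p y u) := by
      apply LipschitzWith.of_dist_le_mul
      intro x y
      rw [Real.dist_eq, Real.coe_toNNReal _ hK0]
      exact hplip x y u
    exact this.continuous
  -- the limit kernel
  set π : S → Measure U :=
    fun y => ∑ u : U, ((Real.toNNReal (p y u) : ℝ≥0∞)) • Measure.dirac u with hπdef
  have hπ_single : ∀ y u, π y {u} = ((Real.toNNReal (p y u) : ℝ≥0∞)) := by
    intro y u
    rw [hπdef]
    rw [Measure.finset_sum_apply]
    simp only [Measure.smul_apply, Measure.dirac_apply, smul_eq_mul,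
      Set.indicator_apply, Set.mem_singleton_iff, Pi.one_apply, mul_ite, mul_one, mul_zero]
    rw [Finset.sum_ite_eq' Finset.univ u (fun v => ((Real.toNNReal (p y v) : ℝ≥0∞)))]
    simp
  have hπprob : ∀ y, IsProbabilityMeasure (π y) := by
    intro y
    constructor
    rw [hπdef, Measure.finset_sum_apply]
    simp only [Measure.smul_apply, measure_univ, smul_eq_mul, mul_one]
    have hcoe : ∀ u : U, ((Real.toNNReal (p y u) : ℝ≥0∞)) = ENNReal.ofReal (p y u) :=
      fun u => rfl
    simp_rw [hcoe]
    rw [← ENNReal.ofReal_sum_of_nonneg (fun u _ => (hp01 y u).1), hpsum, ENNReal.ofReal_one]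
  refine ⟨π, hπprob, ?_, ?_⟩
  · -- Lipschitz property of the limit
    intro y y'
    haveI := hπprob y
    haveI := hπprob y'
    refine stmt9_W1_le _ _ (mul_nonneg hL dist_nonneg) (fun f hf => ?_)
    have hval : ∀ (y₀ : S), ∫ x, f x ∂(π y₀) = ∑ u : U, p y₀ u * f u := by
      intro y₀
      haveI := hπprob y₀
      rw [stmt9_integral_eq_sum]
      refine Finset.sum_congr rfl fun u _ => ?_
      rw [hπ_single y₀ u]
      rw [ENNReal.coe_toReal, Real.coe_toNNReal _ (hp01 y₀ u).1]
    rw [hval y, hval y']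
    have hterm : ∀ k, (∑ u : U, q (φ k) y u * f u) - (∑ u : U, q (φ k) y' u * f u)
        ≤ L * dist y y' := by
      intro k
      haveI := hπnp (φ k) y
      haveI := hπnp (φ k) y'
      have hiq : ∀ (y₀ : S), ∫ x, f x ∂(πn (φ k) y₀) = ∑ u : U, q (φ k) y₀ u * f u := by
        intro y₀
        haveI := hπnp (φ k) y₀
        rw [stmt9_integral_eq_sum]
      have := (stmt9_le_W1 (πn (φ k) y) (πn (φ k) y') hf).trans (hπnLip (φ k) y y')
      rwa [hiq y, hiq y'] at this
    have htt : Tendsto (fun k => (∑ u : U, q (φ k) y u * f u) - (∑ u : U, q (φ k) y' u * f u))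
        atTop (nhds ((∑ u : U, p y u * f u) - (∑ u : U, p y' u * f u))) :=
      ((tendsto_finset_sum _ fun u _ => (htend y u).mul_const (f u)).sub
        (tendsto_finset_sum _ fun u _ => (htend y' u).mul_const (f u)))
    exact le_of_tendsto htt (Filter.Eventually.of_forall hterm)
  · -- equality of measures
    -- second countability instances
    haveI : SecondCountableTopology X := inferInstance
    haveI : SecondCountableTopology S := inferInstance
    -- weight functions
    have hqcont : ∀ n u, Continuous fun a : X × S => q n a.2 u := by
      intro n u
      have : LipschitzWith (Real.toNNReal K) (fun y : S => q n y u) := by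
        apply LipschitzWith.of_dist_le_mul
        intro x y
        rw [Real.dist_eq, Real.coe_toNNReal _ hK0]
        exact hKlip n x y u
      exact this.continuous.comp continuous_snd
    set rn : ℕ → (X × S) → U → ℝ≥0 := fun n a u => Real.toNNReal (q n a.2 u) with hrndef
    have hrn : ∀ n a u, (πn n a.2) {u} = ((rn n a u : ℝ≥0∞)) := fun n a u =>
      (ENNReal.ofReal_toReal (measure_ne_top _ _)).symm
    have hrnmeas : ∀ n u, Measurable fun a : X × S => rn n a u := fun n u =>
      (continuous_real_toNNReal.comp (hqcont n u)).measurable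
    set rInf : (X × S) → U → ℝ≥0 := fun a u => Real.toNNReal (p a.2 u) with hrinfdef
    have hrinf : ∀ a u, (π a.2) {u} = ((rInf a u : ℝ≥0∞)) := fun a u => hπ_single a.2 u
    have hrinfmeas : ∀ u, Measurable fun a : X × S => rInf a u := by
      intro u
      exact (continuous_real_toNNReal.comp ((hpcont u).comp continuous_snd)).measurable
    have hrncoe : ∀ n a u, ((rn n a u : ℝ)) = q n a.2 u := fun n a u =>
      Real.coe_toNNReal _ (hq01 n a.2 u).1
    have hrinfcoe : ∀ a u, ((rInf a u : ℝ)) = p a.2 u := fun a u =>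
      Real.coe_toNNReal _ (hp01 a.2 u).1
    have hκn : ∀ n (a : X × S), IsProbabilityMeasure (πn n a.2) := fun n a => hπnp n a.2
    have hκinf : ∀ a : X × S, IsProbabilityMeasure (π a.2) := fun a => hπprob a.2
    haveI hjointprob : IsProbabilityMeasure (jointMeasure μxy (fun p => π p.2)) :=
      stmt9_joint_prob μxy _ hκinf rInf hrinf hrinfmeas
    -- key: equality of integrals of real bounded continuous functions
    have hkey : ∀ g : BoundedContinuousFunction ((X × S) × U) ℝ,
        ∫ z, g z ∂h = ∫ z, g z ∂(jointMeasure μxy (fun p => π p.2)) := by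
      intro g
      have h1 : Tendsto (fun k => ∫ z, g z ∂(jointMeasure μxy (fun p => πn (φ k) p.2)))
          atTop (nhds (∫ z, g z ∂h)) := (hconv g).comp hφ.tendsto_atTop
      have h2 : ∀ k, ∫ z, g z ∂(jointMeasure μxy (fun p => πn (φ k) p.2))
          = ∫ a, (∑ u : U, ((rn (φ k) a u : ℝ)) * g (a, u)) ∂μxy := fun k =>
        stmt9_integral_joint μxy _ (hκn (φ k)) (rn (φ k)) (hrn (φ k)) (hrnmeas (φ k))
          g g.continuous ‖g‖ (fun z => g.norm_coe_le_norm z)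
      have h4 : ∫ z, g z ∂(jointMeasure μxy (fun p => π p.2))
          = ∫ a, (∑ u : U, ((rInf a u : ℝ)) * g (a, u)) ∂μxy :=
        stmt9_integral_joint μxy _ hκinf rInf hrinf hrinfmeas
          g g.continuous ‖g‖ (fun z => g.norm_coe_le_norm z)
      have h3 : Tendsto (fun k => ∫ a, (∑ u : U, ((rn (φ k) a u : ℝ)) * g (a, u)) ∂μxy)
          atTop (nhds (∫ a, (∑ u : U, ((rInf a u : ℝ)) * g (a, u)) ∂μxy)) := by
        apply tendsto_integral_of_dominated_convergence
          (bound := fun _ : X × S => ∑ _u : U, ‖g‖)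
        · intro k
          refine Continuous.aestronglyMeasurable ?_
          refine continuous_finset_sum _ fun u _ => ?_
          exact (NNReal.continuous_coe.comp
              (continuous_real_toNNReal.comp (hqcont (φ k) u))).mul
            (g.continuous.comp (continuous_id.prodMk continuous_const))
        · exact integrable_const _
        · intro k
          refine Filter.Eventually.of_forall fun a => ?_
          refine (norm_sum_le _ _).trans (Finset.sum_le_sum fun u _ => ?_)
          have hb : ‖((rn (φ k) a u : ℝ)) * g (a, u)‖ ≤ ‖g (a, u)‖ := by
            rw [norm_mul, Real.norm_eq_abs, abs_of_nonneg (NNReal.coe_nonneg _)]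
            have := stmt9_r_le_one _ (hκn (φ k)) (rn (φ k)) (hrn (φ k)) a u
            nlinarith [norm_nonneg (g (a, u))]
          exact hb.trans (g.norm_coe_le_norm (a, u))
        · refine Filter.Eventually.of_forall fun a => ?_
          refine tendsto_finset_sum _ fun u _ => ?_
          simp_rw [hrncoe, hrinfcoe]
          exact (htend a.2 u).mul_const _
      rw [h4]
      have h1' : Tendsto (fun k => ∫ a, (∑ u : U, ((rn (φ k) a u : ℝ)) * g (a, u)) ∂μxy)
          atTop (nhds (∫ z, g z ∂h)) := by
        rw [← funext h2]
        exact h1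
      exact tendsto_nhds_unique h1' h3
    -- upgrade to equality of measures
    apply ext_of_forall_lintegral_eq_of_IsFiniteMeasure
    intro f
    have hlip1 : LipschitzWith 1 (fun x : ℝ≥0 => (x : ℝ)) := by
      apply LipschitzWith.of_dist_le_mul
      intro x y
      rw [NNReal.coe_one, one_mul, NNReal.dist_eq, Real.dist_eq]
    set gR : BoundedContinuousFunction ((X × S) × U) ℝ :=
      BoundedContinuousFunction.comp _ hlip1 f with hgRdef
    have hgR : ∀ z, gR z = ((f z : ℝ)) := fun z => rfl
    have e1 : ∫⁻ z, f z ∂h = ENNReal.ofReal (∫ z, ((f z : ℝ)) ∂h) :=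
      lintegral_coe_eq_integral _ (gR.integrable h)
    have e2 : ∫⁻ z, f z ∂(jointMeasure μxy (fun p => π p.2))
        = ENNReal.ofReal (∫ z, ((f z : ℝ)) ∂(jointMeasure μxy (fun p => π p.2))) :=
      lintegral_coe_eq_integral _ (gR.integrable _)
    rw [e1, e2]
    have := hkey gR
    simp only [hgR] at this
    rw [this]
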